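/- Let N be a positive integer and let q, t, c ∈ ℂ with |q| < 1, |t| < 1 and |cq| < 1. Then ∑_{n=0}^∞ c^n · [ (t;q)_n / (t;q)_{N+n} − 1 ] = ∑_{n=1}^∞ (q^N;q)_n · t^n / ( (q;q)_n · (1 − cq^n) ). -/

import Mathlib

/-- Finite q-Pochhammer symbol `(x;q)_n = ∏_{k=0}^{n-1} (1 - x q^k)`. -/
noncomputable def qPoch (x q : ℂ) (n : ℕ) : ℂ := ∏ k ∈ Finset.range n, (1 - x * q ^ k)

/-- Infinite q-Pochhammer symbol `(x;q)_∞ = ∏_{k=0}^{∞} (1 - x q^k)`. -/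
noncomputable def qPochInf (x q : ℂ) : ℂ := ∏' k : ℕ, (1 - x * q ^ k)

/-- Gaussian binomial coefficient `[n k]_q`, equal to `0` for `k > n`. -/
noncomputable def gbinom (q : ℂ) (n k : ℕ) : ℂ :=
  if k ≤ n then qPoch q q n / (qPoch q q k * qPoch q q (n - k)) else 0

lemma qPoch_zero (x q : ℂ) : qPoch x q 0 = 1 := by simp [qPoch]

lemma qPoch_succ (x q : ℂ) (n : ℕ) : qPoch x q (n+1) = qPoch x q n * (1 - x * q ^ n) :=
  Finset.prod_range_succ _ _

lemma qPoch_succ' (x q : ℂ) (n : ℕ) : qPoch x q (n+1) = (1 - x) * qPoch (x*q) q n := by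
  rw [qPoch, Finset.prod_range_succ']
  simp only [pow_zero, mul_one, pow_succ]
  rw [mul_comm, qPoch]
  congr 1
  exact Finset.prod_congr rfl fun k _ => by ring_nf

lemma qPoch_add (x q : ℂ) (a b : ℕ) : qPoch x q (a+b) = qPoch x q a * qPoch (x*q^a) q b := by
  rw [qPoch, Finset.prod_range_add]
  congr 1
  exact Finset.prod_congr rfl fun k _ => by rw [pow_add]; ring

lemma qPoch_ne_zero {x q : ℂ} (hx : ‖x‖ < 1) (hq : ‖q‖ ≤ 1) (n : ℕ) :
    qPoch x q n ≠ 0 := by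
  rw [qPoch]
  apply Finset.prod_ne_zero_iff.2
  intro k _
  intro h
  have : x * q ^ k = 1 := by linear_combination -h
  have h2 : ‖x * q ^ k‖ < 1 := by
    rw [norm_mul, norm_pow]
    calc ‖x‖ * ‖q‖ ^ k ≤ ‖x‖ * 1 := by
          apply mul_le_mul_of_nonneg_left (pow_le_one₀ (by positivity) hq) (by positivity)
      _ < 1 := by simpa using hx
  rw [this] at h2; simp at h2

lemma geom_sum_le_inv {r : ℝ} (h0 : 0 ≤ r) (h1 : r < 1) (n : ℕ) :
    ∑ k ∈ Finset.range n, r ^ k ≤ (1 - r)⁻¹ := by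
  have := Summable.sum_le_tsum (Finset.range n) (fun i _ => pow_nonneg h0 i)
    (summable_geometric_of_lt_one h0 h1)
  rwa [tsum_geometric_of_lt_one h0 h1] at this

lemma exp_neg_le_one_sub {a : ℝ} (h0 : 0 ≤ a) (h1 : a < 1) :
    Real.exp (-(a/(1-a))) ≤ 1 - a := by
  have hpos : 0 < 1 - a := by linarith
  have h2 : a/(1-a) + 1 ≤ Real.exp (a/(1-a)) := Real.add_one_le_exp _
  have h3 : (1-a)⁻¹ ≤ Real.exp (a/(1-a)) := by
    have : a/(1-a) + 1 = (1-a)⁻¹ := by field_simp; ring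
    linarith [this ▸ h2]
  calc Real.exp (-(a/(1-a))) = (Real.exp (a/(1-a)))⁻¹ := Real.exp_neg _
    _ ≤ ((1-a)⁻¹)⁻¹ := by
        apply inv_anti₀ (by positivity) h3
    _ = 1 - a := inv_inv _

lemma abs_qPoch_le {q x : ℂ} (hq : ‖q‖ < 1) (hx : ‖x‖ ≤ 1) (n : ℕ) :
    ‖qPoch x q n‖ ≤ Real.exp ((1 - ‖q‖)⁻¹) := by
  have hr0 : (0:ℝ) ≤ ‖q‖ := norm_nonneg q
  rw [qPoch, norm_prod]
  calc ∏ k ∈ Finset.range n, ‖1 - x * q ^ k‖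
      ≤ ∏ k ∈ Finset.range n, Real.exp (‖q‖ ^ k) := by
        apply Finset.prod_le_prod (fun k _ => norm_nonneg _)
        intro k _
        calc ‖1 - x * q ^ k‖ ≤ ‖(1:ℂ)‖ + ‖x * q ^ k‖ := norm_sub_le _ _
          _ ≤ 1 + ‖q‖ ^ k := by
              rw [norm_one, norm_mul, norm_pow]
              have : ‖x‖ * ‖q‖ ^ k ≤ 1 * ‖q‖ ^ k :=
                mul_le_mul_of_nonneg_right hx (by positivity)
              linarith
          _ ≤ Real.exp (‖q‖ ^ k) := by
              have := Real.add_one_le_exp (‖q‖ ^ k); linarith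
    _ = Real.exp (∑ k ∈ Finset.range n, ‖q‖ ^ k) := (Real.exp_sum _ _).symm
    _ ≤ Real.exp ((1 - ‖q‖)⁻¹) :=
        Real.exp_le_exp.2 (geom_sum_le_inv hr0 hq n)

lemma abs_qPoch_q_ge {q : ℂ} (hq : ‖q‖ < 1) (n : ℕ) :
    Real.exp (-(‖q‖ / ((1-‖q‖)*(1-‖q‖)))) ≤ ‖qPoch q q n‖ := by
  have hr0 : (0:ℝ) ≤ ‖q‖ := norm_nonneg q
  have hpos : 0 < 1 - ‖q‖ := by linarith
  rw [qPoch, norm_prod]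
  have step : ∀ k ∈ Finset.range n,
      Real.exp (-(‖q‖ ^ (k+1) / (1 - ‖q‖))) ≤ ‖1 - q * q ^ k‖ := by
    intro k _
    have ha0 : (0:ℝ) ≤ ‖q‖ ^ (k+1) := by positivity
    have ha1 : ‖q‖ ^ (k+1) < 1 := by
      calc ‖q‖ ^ (k+1) ≤ ‖q‖ ^ 1 := pow_le_pow_of_le_one hr0 hq.le (by omega)
        _ < 1 := by simpa using hq
    calc Real.exp (-(‖q‖ ^ (k+1) / (1 - ‖q‖)))
        ≤ Real.exp (-(‖q‖ ^ (k+1) / (1 - ‖q‖ ^ (k+1)))) := by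
          apply Real.exp_le_exp.2
          apply neg_le_neg
          apply div_le_div_of_nonneg_left ha0 (by linarith)
          have : ‖q‖ ^ (k+1) ≤ ‖q‖ := by
            calc ‖q‖ ^ (k+1) ≤ ‖q‖ ^ 1 := pow_le_pow_of_le_one hr0 hq.le (by omega)
              _ = ‖q‖ := pow_one _
          linarith
      _ ≤ 1 - ‖q‖ ^ (k+1) := exp_neg_le_one_sub ha0 ha1
      _ ≤ ‖1 - q * q ^ k‖ := by
          have := norm_sub_norm_le (1:ℂ) (q * q ^ k)
          rw [norm_one, norm_mul, norm_pow] at this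
          calc 1 - ‖q‖ ^ (k+1) = 1 - ‖q‖ * ‖q‖ ^ k := by ring
            _ ≤ ‖1 - q * q ^ k‖ := this
  calc Real.exp (-(‖q‖ / ((1-‖q‖)*(1-‖q‖))))
      ≤ Real.exp (-(∑ k ∈ Finset.range n, ‖q‖ ^ (k+1) / (1 - ‖q‖))) := by
        apply Real.exp_le_exp.2
        apply neg_le_neg
        have h1 : ∑ k ∈ Finset.range n, ‖q‖ ^ (k+1) / (1 - ‖q‖)
            = (∑ k ∈ Finset.range n, ‖q‖ ^ k) * ‖q‖ / (1 - ‖q‖) := by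
          rw [← Finset.sum_div]
          congr 1
          rw [Finset.sum_mul]
          exact Finset.sum_congr rfl fun k _ => by rw [pow_succ]
        rw [h1]
        rw [div_le_div_iff₀ hpos (by positivity)]
        have h2 := geom_sum_le_inv hr0 hq n
        have h3 : (∑ k ∈ Finset.range n, ‖q‖ ^ k) * ‖q‖ ≤ (1-‖q‖)⁻¹ * ‖q‖ :=
          mul_le_mul_of_nonneg_right h2 hr0
        calc (∑ k ∈ Finset.range n, ‖q‖ ^ k) * ‖q‖ * ((1-‖q‖)*(1-‖q‖))
            ≤ (1-‖q‖)⁻¹ * ‖q‖ * ((1-‖q‖)*(1-‖q‖)) := by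
              apply mul_le_mul_of_nonneg_right h3 (by positivity)
          _ = ‖q‖ * ((1-‖q‖)⁻¹ * (1-‖q‖)) * (1-‖q‖) := by ring
          _ = ‖q‖ * (1-‖q‖) := by rw [inv_mul_cancel₀ (ne_of_gt hpos)]; ring
    _ = ∏ k ∈ Finset.range n, Real.exp (-(‖q‖ ^ (k+1) / (1 - ‖q‖))) := by
        rw [← Real.exp_sum, ← Finset.sum_neg_distrib]
    _ ≤ ∏ k ∈ Finset.range n, ‖1 - q * q ^ k‖ :=
        Finset.prod_le_prod (fun k _ => (Real.exp_pos _).le) step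

lemma ratio_le {q x : ℂ} (hq : ‖q‖ < 1) (hx : ‖x‖ ≤ 1) (n : ℕ) :
    ‖qPoch x q n / qPoch q q n‖ ≤
      Real.exp ((1 - ‖q‖)⁻¹) * Real.exp (‖q‖ / ((1-‖q‖)*(1-‖q‖))) := by
  rw [norm_div]
  have h1 := abs_qPoch_le hq hx n
  have h2 := abs_qPoch_q_ge hq n
  calc ‖qPoch x q n‖ / ‖qPoch q q n‖
      ≤ Real.exp ((1 - ‖q‖)⁻¹) / Real.exp (-(‖q‖ / ((1-‖q‖)*(1-‖q‖)))) :=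
        div_le_div₀ (Real.exp_pos _).le h1 (Real.exp_pos _) h2
    _ = _ := by rw [Real.exp_neg, div_eq_mul_inv, inv_inv]

lemma summable_g {q y x : ℂ} (hq : ‖q‖ < 1) (hy : ‖y‖ ≤ 1) (hx : ‖x‖ < 1) :
    Summable (fun m : ℕ => qPoch y q m / qPoch q q m * x ^ m) := by
  apply Summable.of_norm_bounded
    (g := fun m => (Real.exp ((1 - ‖q‖)⁻¹) * Real.exp (‖q‖ / ((1-‖q‖)*(1-‖q‖)))) * ‖x‖ ^ m)
  · exact (summable_geometric_of_lt_one (norm_nonneg x) hx).mul_left _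
  · intro m
    rw [norm_mul, norm_pow]
    exact mul_le_mul_of_nonneg_right (ratio_le hq hy m) (by positivity)

lemma qPoch_key {q : ℂ} (N j : ℕ) :
    qPoch (q^(N+1)) q (j+1) - qPoch (q^N) q (j+1)
      = q^N * (1 - q^(j+1)) * qPoch (q^(N+1)) q j := by
  rw [qPoch_succ' (q^N) q j, qPoch_succ (q^(N+1)) q j, ← pow_succ q N]
  have e : (q:ℂ)^(N+1)*q^j = q^N * q^(j+1) := by rw [← pow_add, ← pow_add]; ring_nf
  rw [e]; ring

lemma qbinom {q : ℂ} (hq : ‖q‖ < 1) : ∀ (N : ℕ) (x : ℂ), ‖x‖ < 1 →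
    qPoch x q N * ∑' m : ℕ, qPoch (q ^ N) q m / qPoch q q m * x ^ m = 1 := by
  have habs : ∀ z : ℂ, ‖z‖ = ‖z‖ := fun z => rfl
  intro N
  induction N with
  | zero =>
    intro x hx
    rw [qPoch_zero, one_mul, tsum_eq_single 0]
    · simp [qPoch_zero]
    · intro m hm
      obtain ⟨j, rfl⟩ : ∃ j, m = j+1 := ⟨m-1, by omega⟩
      have h0 : qPoch ((q:ℂ)^0) q (j+1) = 0 := by
        rw [pow_zero, qPoch_succ']; simp
      rw [h0]; simp
  | succ N ih =>
    intro x hx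
    have hq1 : ‖q‖ ≤ 1 := hq.le
    have hyN : ‖(q:ℂ)^N‖ ≤ 1 := by rw [norm_pow]; exact pow_le_one₀ (norm_nonneg q) hq1
    have hyN1 : ‖(q:ℂ)^(N+1)‖ ≤ 1 := by rw [norm_pow]; exact pow_le_one₀ (norm_nonneg q) hq1
    have hS1 : Summable (fun m : ℕ => qPoch (q^(N+1)) q m / qPoch q q m * x ^ m) :=
      summable_g hq hyN1 hx
    have hS0 : Summable (fun m : ℕ => qPoch (q^N) q m / qPoch q q m * x ^ m) :=
      summable_g hq hyN hx
    have key : ∑' m : ℕ, qPoch (q^N) q m / qPoch q q m * x ^ m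
        = (1 - x * q ^ N) * ∑' m : ℕ, qPoch (q^(N+1)) q m / qPoch q q m * x ^ m := by
      have hdiff : (∑' m : ℕ, qPoch (q^(N+1)) q m / qPoch q q m * x ^ m)
          - (∑' m : ℕ, qPoch (q^N) q m / qPoch q q m * x ^ m)
          = ∑' m : ℕ, (qPoch (q^(N+1)) q m / qPoch q q m * x ^ m
              - qPoch (q^N) q m / qPoch q q m * x ^ m) := (Summable.tsum_sub hS1 hS0).symm
      have hterm : ∀ j : ℕ, qPoch (q^(N+1)) q (j+1) / qPoch q q (j+1) * x ^ (j+1)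
              - qPoch (q^N) q (j+1) / qPoch q q (j+1) * x ^ (j+1)
          = (x * q^N) * (qPoch (q^(N+1)) q j / qPoch q q j * x ^ j) := by
        intro j
        have hD : qPoch q q j ≠ 0 := by
          apply qPoch_ne_zero _ (by rw [habs]; exact hq1) j
          rw [habs]; exact hq
        have e2 : (1:ℂ) - q*q^j = 1 - q^(j+1) := by rw [pow_succ']
        have hE : (1:ℂ) - q^(j+1) ≠ 0 := by
          intro h
          have : (q:ℂ)^(j+1) = 1 := by linear_combination -h
          have h2 : ‖(q:ℂ)^(j+1)‖ < 1 := by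
            rw [norm_pow]
            calc ‖q‖^(j+1) ≤ ‖q‖^1 := pow_le_pow_of_le_one (norm_nonneg q) hq1 (by omega)
              _ < 1 := by simpa using hq
          rw [this] at h2; simp at h2
        rw [qPoch_succ q q j, e2]
        have hAB := qPoch_key (q := q) N j
        calc qPoch (q^(N+1)) q (j+1) / (qPoch q q j * (1 - q^(j+1))) * x ^ (j+1)
              - qPoch (q^N) q (j+1) / (qPoch q q j * (1 - q^(j+1))) * x ^ (j+1)
            = (qPoch (q^(N+1)) q (j+1) - qPoch (q^N) q (j+1))
                / (qPoch q q j * (1 - q^(j+1))) * x ^ (j+1) := by ring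
          _ = (q^N * (1 - q^(j+1)) * qPoch (q^(N+1)) q j)
                / (qPoch q q j * (1 - q^(j+1))) * x ^ (j+1) := by rw [hAB]
          _ = (x * q^N) * (qPoch (q^(N+1)) q j / qPoch q q j * x ^ j) := by
              field_simp
              ring
      rw [Summable.tsum_eq_zero_add (hS1.sub hS0)] at hdiff
      simp only [hterm] at hdiff
      rw [tsum_mul_left] at hdiff
      have h00 : qPoch (q^(N+1)) q 0 / qPoch q q 0 * x ^ 0
          - qPoch (q^N) q 0 / qPoch q q 0 * x ^ 0 = 0 := by simp [qPoch_zero]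
      rw [h00, zero_add] at hdiff
      linear_combination -hdiff
    rw [qPoch_succ, mul_assoc, ← key]
    exact ih x hx

theorem stmt11 (N : ℕ) (hN : 1 ≤ N) (q t c : ℂ) (hq : ‖q‖ < 1)
    (ht : ‖t‖ < 1) (hcq : ‖c * q‖ < 1) :
    ∑' n : ℕ, c ^ n * (qPoch t q n / qPoch t q (N + n) - 1)
      = ∑' n : ℕ, qPoch (q ^ N) q (n + 1) * t ^ (n + 1) /
          (qPoch q q (n + 1) * (1 - c * q ^ (n + 1))) := by
  have hqn : ‖q‖ < 1 := hq
  have htn : ‖t‖ < 1 := ht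
  have hcqn : ‖c * q‖ < 1 := hcq
  have hq1 : ‖q‖ ≤ 1 := hqn.le
  have hqk : ∀ k : ℕ, ‖(q:ℂ)^k‖ ≤ 1 := fun k => by
    rw [norm_pow]; exact pow_le_one₀ (norm_nonneg q) hq1
  have hyN : ‖(q:ℂ)^N‖ ≤ 1 := hqk N
  have hDm : ∀ m : ℕ, qPoch q q m ≠ 0 := fun m => qPoch_ne_zero hq hq.le m
  have htq : ∀ n : ℕ, ‖t * q^n‖ < 1 := fun n => by
    rw [norm_mul]
    calc ‖t‖ * ‖q^n‖ ≤ ‖t‖ * 1 := mul_le_mul_of_nonneg_left (hqk n) (norm_nonneg t)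
      _ < 1 := by simpa using htn
  have hcqm : ∀ m : ℕ, ‖c * q^(m+1)‖ < 1 := fun m => by
    have e : c * q^(m+1) = (c*q) * q^m := by rw [pow_succ']; ring
    rw [e, norm_mul]
    calc ‖c*q‖ * ‖q^m‖ ≤ ‖c*q‖ * 1 := mul_le_mul_of_nonneg_left (hqk m) (norm_nonneg _)
      _ < 1 := by simpa using hcqn
  -- step 1 : rewrite each LHS summand as a tsum
  have step1 : ∀ n : ℕ, c ^ n * (qPoch t q n / qPoch t q (N + n) - 1)
      = ∑' m : ℕ, c ^ n * (qPoch (q^N) q (m+1) / qPoch q q (m+1) * (t*q^n)^(m+1)) := by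
    intro n
    have hsplit : qPoch t q (N + n) = qPoch t q n * qPoch (t*q^n) q N := by
      rw [add_comm, qPoch_add]
    have htn0 : qPoch t q n ≠ 0 := qPoch_ne_zero ht hq.le n
    have hP0 : qPoch (t*q^n) q N ≠ 0 := by
      have h := htq n
      exact qPoch_ne_zero h hq.le N
    have hg := qbinom hqn N (t*q^n) (htq n)
    have hsum : Summable (fun m : ℕ => qPoch (q^N) q m / qPoch q q m * (t*q^n) ^ m) :=
      summable_g hqn hyN (htq n)
    have hratio : qPoch t q n / qPoch t q (N + n)
        = ∑' m : ℕ, qPoch (q^N) q m / qPoch q q m * (t*q^n) ^ m := by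
      rw [hsplit, div_mul_eq_div_div, div_self htn0, one_div,
        inv_eq_of_mul_eq_one_right hg]
    rw [hratio, Summable.tsum_eq_zero_add hsum]
    have h0 : qPoch (q^N) q 0 / qPoch q q 0 * (t*q^n) ^ 0 = 1 := by simp [qPoch_zero]
    rw [h0, add_sub_cancel_left, ← tsum_mul_left]
  set K := Real.exp ((1 - ‖q‖)⁻¹) * Real.exp (‖q‖ / ((1-‖q‖)*(1-‖q‖))) with hK
  have hF : Summable (Function.uncurry
      (fun n m : ℕ => c ^ n * (qPoch (q^N) q (m+1) / qPoch q q (m+1) * (t*q^n)^(m+1)))) := by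
    apply Summable.of_norm_bounded (g := fun p : ℕ×ℕ => (K*‖t‖) * (‖c*q‖^p.1 * ‖t‖^p.2))
    · apply Summable.mul_left
      exact (summable_geometric_of_lt_one (norm_nonneg _) hcqn).mul_of_nonneg
        (summable_geometric_of_lt_one (norm_nonneg t) htn)
        (fun _ => by positivity) (fun _ => by positivity)
    · rintro ⟨n, m⟩
      have hKpos : 0 < K := by rw [hK]; positivity
      have hR := ratio_le (x := q^N) hqn hyN (m+1)
      simp only [Function.uncurry]
      have e : ‖c‖^n * (‖t‖*‖q‖^n)^(m+1) = (‖c‖*‖q‖)^n * ‖q‖^(n*m) * ‖t‖^(m+1) := by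
        rw [mul_pow, ← pow_mul, mul_pow]
        have e2 : n*(m+1) = n + n*m := by ring
        rw [e2, pow_add]; ring
      have hnd : ‖qPoch (q ^ N) q (m + 1) / qPoch q q (m + 1)‖
          = ‖qPoch (q ^ N) q (m + 1)‖ / ‖qPoch q q (m + 1)‖ := norm_div _ _
      calc ‖c ^ n * (qPoch (q^N) q (m+1) / qPoch q q (m+1) * (t*q^n)^(m+1))‖
          = ‖qPoch (q ^ N) q (m + 1) / qPoch q q (m + 1)‖
              * (‖c‖^n * (‖t‖*‖q‖^n)^(m+1)) := by
            simp only [norm_mul, norm_pow]; ring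
        _ = ‖qPoch (q ^ N) q (m + 1) / qPoch q q (m + 1)‖
              * ((‖c‖*‖q‖)^n * ‖q‖^(n*m) * ‖t‖^(m+1)) := by rw [e]
        _ ≤ K * ((‖c‖*‖q‖)^n * 1 * ‖t‖^(m+1)) := by
            apply mul_le_mul
            · exact hR
            · apply mul_le_mul_of_nonneg_right _ (by positivity)
              apply mul_le_mul_of_nonneg_left _ (by positivity)
              exact pow_le_one₀ (norm_nonneg q) hq1
            · positivity
            · exact hKpos.le
        _ = (K*‖t‖) * ((‖c‖*‖q‖)^n * ‖t‖^m) := by rw [pow_succ]; ring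
        _ = (K*‖t‖) * (‖c*q‖^n * ‖t‖^m) := by rw [norm_mul]
  calc ∑' n : ℕ, c ^ n * (qPoch t q n / qPoch t q (N + n) - 1)
      = ∑' (n : ℕ) (m : ℕ),
          c ^ n * (qPoch (q^N) q (m+1) / qPoch q q (m+1) * (t*q^n)^(m+1)) := tsum_congr step1
    _ = ∑' (m : ℕ) (n : ℕ),
          c ^ n * (qPoch (q^N) q (m+1) / qPoch q q (m+1) * (t*q^n)^(m+1)) := (Summable.tsum_comm hF).symm
    _ = ∑' m : ℕ, qPoch (q ^ N) q (m + 1) * t ^ (m + 1) /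
          (qPoch q q (m + 1) * (1 - c * q ^ (m + 1))) := by
        apply tsum_congr
        intro m
        have hterm : ∀ n : ℕ, c ^ n * (qPoch (q^N) q (m+1) / qPoch q q (m+1) * (t*q^n)^(m+1))
            = (qPoch (q^N) q (m+1) / qPoch q q (m+1) * t^(m+1)) * (c * q^(m+1))^n := by
          intro n
          rw [mul_pow t (q^n), ← pow_mul, mul_comm n (m+1), pow_mul, mul_pow c (q^(m+1))]
          ring
        rw [tsum_congr hterm, tsum_mul_left, tsum_geometric_of_norm_lt_one (hcqm m)]
        have hE : (1:ℂ) - c * q^(m+1) ≠ 0 := by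
          intro h
          have h2 : c * q^(m+1) = 1 := by linear_combination -h
          have := hcqm m
          rw [h2] at this; simp at this
        field_simp
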